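/- Fix N ≥ 3, m ≥ 2, and B₂ ≥ 0. Suppose a split value is drawn from m candidate points lying in [0,1] according to a probability mass function p with 1/(1+(m-1)e^{B₂}) ≤ p(v) ≤ e^{B₂}/(e^{B₂}+(m-1)) for every candidate v. If the candidate points are equally spaced (the i-th point is i/(m+1)), then the probability that the selected point lies in the middle region [1/N, (N-1)/N] is at least ((N-2)/N)·e^{-2B₂} − o(1) as m → ∞; in particular, for every δ > 0 there exists m₀ such that for m ≥ m₀ this probability is at least ((N-2)/N)e^{-2B₂} − δ. -/

import Mathlib

open Finset

set_option maxHeartbeats 1000000 in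
/-- Lemma 4 of the MRF paper: for any distribution over `m` equally spaced split
candidates whose point probabilities obey the exponential-mechanism bounds, the
mass of the middle region `[1/N, (N-1)/N]` is asymptotically at least
`((N-2)/N)·e^{-2B₂}`. -/
theorem middle_region_mass (N : ℕ) (hN : 3 ≤ N) (B₂ : ℝ) (hB : 0 ≤ B₂)
    (δ : ℝ) (hδ : 0 < δ) :
    ∃ m₀ : ℕ, ∀ m : ℕ, m₀ ≤ m → 2 ≤ m →
      ∀ p : Fin m → ℝ,
        (∀ v, 1 / (1 + ((m : ℝ) - 1) * Real.exp B₂) ≤ p v ∧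
          p v ≤ Real.exp B₂ / (Real.exp B₂ + ((m : ℝ) - 1))) →
        (∑ v : Fin m, p v = 1) →
        ((N : ℝ) - 2) / N * Real.exp (-(2 * B₂)) - δ ≤
          ∑ v ∈ Finset.univ.filter (fun i : Fin m =>
            (1 : ℝ) / N ≤ ((i : ℕ) + 1) / ((m : ℝ) + 1) ∧
            ((i : ℕ) + 1) / ((m : ℝ) + 1) ≤ ((N : ℝ) - 1) / N), p v := by
  obtain ⟨M, hM⟩ := exists_nat_gt (1 / δ)
  refine ⟨M + 1, fun m hm hm2 p hp hsum => ?_⟩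
  have hN0 : (0:ℕ) < N := by omega
  have hNR : (3:ℝ) ≤ (N:ℝ) := by exact_mod_cast hN
  have hN0R : (0:ℝ) < (N:ℝ) := by linarith
  have hmR : (2:ℝ) ≤ (m:ℝ) := by exact_mod_cast hm2
  have hm0 : 0 < m := by omega
  have hm0R : (0:ℝ) < (m:ℝ) := by linarith
  set E := Real.exp B₂ with hE
  have hE1 : (1:ℝ) ≤ E := Real.one_le_exp hB
  have hE0 : (0:ℝ) < E := lt_of_lt_of_le one_pos hE1
  set a := (m + 1) / N with ha
  set b := (N - 1) * (m + 1) / N with hb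
  set S := Finset.univ.filter (fun i : Fin m =>
      (1 : ℝ) / N ≤ ((i : ℕ) + 1) / ((m : ℝ) + 1) ∧
      ((i : ℕ) + 1) / ((m : ℝ) + 1) ≤ ((N : ℝ) - 1) / N) with hS
  -- b ≤ m
  have hbm : b ≤ m := by
    have h1 : (N - 1) * (m + 1) < N * (m + 1) := by
      have := Nat.mul_lt_mul_of_pos_right (show N - 1 < N by omega)
        (show 0 < m + 1 by omega)
      exact this
    have h2 : b < m + 1 := by
      rw [hb, Nat.div_lt_iff_lt_mul hN0, mul_comm (m+1) N]
      exact h1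
    omega
  -- count lower bound via injection of Ico a b into S
  have hcard : b - a ≤ S.card := by
    rw [← Nat.card_Ico a b]
    apply Finset.card_le_card_of_injOn (fun j => (⟨j % m, Nat.mod_lt j hm0⟩ : Fin m))
    · intro j hj
      rw [Finset.mem_coe, Finset.mem_Ico] at hj
      have hjm : j < m := lt_of_lt_of_le hj.2 hbm
      have hmod : j % m = j := Nat.mod_eq_of_lt hjm
      simp only [hS, Finset.mem_coe, Finset.mem_filter, Finset.mem_univ, true_and, Fin.val_mk, hmod]
      have hm1 : (0:ℝ) < (m:ℝ) + 1 := by positivity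
      constructor
      · rw [div_le_div_iff₀ hN0R hm1]
        have h4 : m + 1 ≤ N * (j + 1) := by
          have h2 : N * a + (m+1) % N = m + 1 := by
            rw [ha]; exact Nat.div_add_mod _ _
          have h3 := Nat.mod_lt (m+1) hN0
          have h5 : N * (a + 1) ≤ N * (j + 1) :=
            Nat.mul_le_mul_left _ (by omega)
          have h7 : N * (a + 1) = N * a + N := by ring
          omega
        have h6 := (Nat.cast_le (α := ℝ)).2 h4
        push_cast at h6
        nlinarith
      · rw [div_le_div_iff₀ hm1 hN0R]
        have h4 : N * (j + 1) ≤ (N - 1) * (m + 1) := by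
          have h5 : b * N ≤ (N-1)*(m+1) := Nat.div_mul_le_self _ _
          have h6 : N * (j+1) ≤ N * b := Nat.mul_le_mul_left _ (by omega)
          have h7 : b * N = N * b := Nat.mul_comm _ _
          omega
        have h6 := (Nat.cast_le (α := ℝ)).2 h4
        push_cast [Nat.cast_sub (show 1 ≤ N by omega)] at h6
        nlinarith
    · intro x hx y hy hxy
      simp only [Finset.coe_Ico, Set.mem_Ico] at hx hy
      have hxm := Nat.mod_eq_of_lt (lt_of_lt_of_le hx.2 hbm)
      have hym := Nat.mod_eq_of_lt (lt_of_lt_of_le hy.2 hbm)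
      simpa [Fin.mk.injEq, hxm, hym] using hxy
  -- sum lower bound
  have hsumS : (S.card : ℝ) * (1 / (1 + ((m:ℝ)-1)*E)) ≤ ∑ v ∈ S, p v := by
    have h := Finset.card_nsmul_le_sum S p _ (fun v _ => (hp v).1)
    simpa [nsmul_eq_mul] using h
  have hlbpos : (0:ℝ) < 1 + ((m:ℝ)-1)*E := by nlinarith
  have hlb2 : 1/((m:ℝ)*E) ≤ 1/(1+((m:ℝ)-1)*E) := by
    apply one_div_le_one_div_of_le hlbpos
    nlinarith
  have hmE0 : (0:ℝ) < (m:ℝ)*E := by positivity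
  -- real bounds on a and b
  have haR : (a:ℝ) ≤ ((m:ℝ)+1)/N := by
    rw [le_div_iff₀ hN0R]
    have h1 : a * N ≤ m + 1 := Nat.div_mul_le_self _ _
    have h2 := (Nat.cast_le (α := ℝ)).2 h1
    push_cast at h2
    linarith
  have hbR : ((N:ℝ)-1)*((m:ℝ)+1)/N - 1 ≤ (b:ℝ) := by
    have h1 : (N-1)*(m+1) < N * (b+1) := by
      have h2 : N * b + ((N-1)*(m+1)) % N = (N-1)*(m+1) := by
        rw [hb]; exact Nat.div_add_mod _ _
      have h3 := Nat.mod_lt ((N-1)*(m+1)) hN0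
      have h7 : N * (b + 1) = N * b + N := by ring
      omega
    have h4 := (Nat.cast_lt (α := ℝ)).2 h1
    push_cast [Nat.cast_sub (show 1 ≤ N by omega)] at h4
    rw [sub_le_iff_le_add, div_le_iff₀ hN0R]
    nlinarith
  have hcardR : (b:ℝ) - (a:ℝ) ≤ (S.card : ℝ) := by
    rcases le_total a b with h | h
    · have h1 := (Nat.cast_le (α := ℝ)).2 hcard
      rw [Nat.cast_sub h] at h1
      exact h1
    · have h1 : (b:ℝ) ≤ (a:ℝ) := by exact_mod_cast h
      have : (0:ℝ) ≤ (S.card : ℝ) := by positivity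
      linarith
  -- now chain everything
  have key : ((N:ℝ)-2)*(m:ℝ)/N - 1 ≤ (S.card : ℝ) := by
    have h1 : ((N:ℝ)-2)*((m:ℝ)+1)/N - 1 ≤ (b:ℝ) - (a:ℝ) := by
      have : ((N:ℝ)-2)*((m:ℝ)+1)/N = ((N:ℝ)-1)*((m:ℝ)+1)/N - ((m:ℝ)+1)/N := by
        field_simp; ring
      linarith
    have h2 : ((N:ℝ)-2)*(m:ℝ)/N ≤ ((N:ℝ)-2)*((m:ℝ)+1)/N := by
      gcongr <;> linarith
    linarith
  have hchain : (((N:ℝ)-2)*(m:ℝ)/N - 1) * (1/((m:ℝ)*E)) ≤ ∑ v ∈ S, p v := by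
    have h1 : (((N:ℝ)-2)*(m:ℝ)/N - 1) * (1/((m:ℝ)*E)) ≤ (S.card : ℝ) * (1/((m:ℝ)*E)) := by
      apply mul_le_mul_of_nonneg_right key (by positivity)
    have h2 : (S.card : ℝ) * (1/((m:ℝ)*E)) ≤ (S.card : ℝ) * (1 / (1 + ((m:ℝ)-1)*E)) := by
      apply mul_le_mul_of_nonneg_left hlb2 (by positivity)
    linarith
  -- final arithmetic
  have heq : (((N:ℝ)-2)*(m:ℝ)/N - 1) * (1/((m:ℝ)*E)) = ((N:ℝ)-2)/N * (1/E) - 1/((m:ℝ)*E) := by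
    field_simp
  have hexp : Real.exp (-(2*B₂)) ≤ 1/E := by
    rw [hE, one_div, ← Real.exp_neg]
    exact Real.exp_le_exp.2 (by linarith)
  have hN2 : (0:ℝ) ≤ ((N:ℝ)-2)/N := by apply div_nonneg <;> linarith
  have h3 : ((N:ℝ)-2)/N * Real.exp (-(2*B₂)) ≤ ((N:ℝ)-2)/N * (1/E) :=
    mul_le_mul_of_nonneg_left hexp hN2
  have hmM : (1:ℝ)/δ < (m:ℝ) := by
    have : (M:ℝ) + 1 ≤ (m:ℝ) := by exact_mod_cast hm
    linarith
  have hdelta : 1/((m:ℝ)*E) ≤ δ := by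
    have h4 : 1/((m:ℝ)*E) ≤ 1/(m:ℝ) := by
      apply one_div_le_one_div_of_le hm0R
      nlinarith
    have h5 : 1/(m:ℝ) < δ := by
      rw [div_lt_iff₀ hm0R]
      have : δ * (1/δ) = 1 := by field_simp
      nlinarith
    linarith
  calc ((N : ℝ) - 2) / N * Real.exp (-(2 * B₂)) - δ
      ≤ ((N:ℝ)-2)/N * (1/E) - 1/((m:ℝ)*E) := by linarith
    _ = (((N:ℝ)-2)*(m:ℝ)/N - 1) * (1/((m:ℝ)*E)) := heq.symm
    _ ≤ ∑ v ∈ S, p v := hchain
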